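/- arXiv:1410.3044 — 5 statements merged into one kernel-verified Lean document; each statement's English description precedes it below -/
import Mathlib

section
/- For every real number z and every angle ω with 0 < ω < 2π, the system cosh((π−ω)z)·sin((π−ω)/2) = cosh(πz) and sinh((π−ω)z)·cos((π−ω)/2) = 0 has no solution. In other words, sinh((π−ω)y) ≠ sinh(πy) for all y = z + i/2 with z real. -/
open Real Complex

lemma aux_sinh_form (x y : ℝ) :
    Complex.sinh ((x : ℂ) + (y : ℂ) * Complex.I) =
      (Real.sinh x * Real.cos y : ℝ) + (Real.cosh x * Real.sin y : ℝ) * Complex.I := by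
  rw [Complex.sinh_add, Complex.sinh_mul_I, Complex.cosh_mul_I]
  push_cast [← Complex.ofReal_sinh, ← Complex.ofReal_cosh]
  ring

lemma aux_key (z a : ℝ) (ha : -Real.pi < a) (ha2 : a < Real.pi) :
    Real.cosh (a * z) * Real.sin (a / 2) < Real.cosh (Real.pi * z) := by
  have hcos : 0 < Real.cos (a / 2) := Real.cos_pos_of_mem_Ioo ⟨by linarith, by linarith⟩
  have hsin : Real.sin (a / 2) < 1 := by
    nlinarith [Real.sin_sq_add_cos_sq (a / 2), Real.sin_le_one (a / 2)]
  have h2 : Real.cosh (a * z) ≤ Real.cosh (Real.pi * z) := by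
    rw [Real.cosh_le_cosh, abs_mul, abs_mul]
    have : |a| ≤ |Real.pi| := by
      rw [abs_of_pos Real.pi_pos, abs_le]; exact ⟨ha.le, ha2.le⟩
    exact mul_le_mul_of_nonneg_right this (abs_nonneg z)
  have h3 : 0 < Real.cosh (a * z) := Real.cosh_pos _
  nlinarith

/-- For every real `z` and every angle `ω` with `0 < ω < 2π`, the system
`cosh((π−ω)z)·sin((π−ω)/2) = cosh(πz)` and `sinh((π−ω)z)·cos((π−ω)/2) = 0`
has no solution; in other words `sinh((π−ω)y) ≠ sinh(πy)` for `y = z + i/2`. -/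
theorem stmt0 (z ω : ℝ) (h1 : 0 < ω) (h2 : ω < 2 * Real.pi) :
    ¬ (Real.cosh ((Real.pi - ω) * z) * Real.sin ((Real.pi - ω) / 2) = Real.cosh (Real.pi * z) ∧
        Real.sinh ((Real.pi - ω) * z) * Real.cos ((Real.pi - ω) / 2) = 0) ∧
    Complex.sinh (((Real.pi : ℂ) - ω) * (z + Complex.I / 2)) ≠
      Complex.sinh ((Real.pi : ℂ) * (z + Complex.I / 2)) := by
  have hkey := aux_key z (Real.pi - ω) (by linarith) (by linarith)
  constructor
  · rintro ⟨hA, _⟩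
    linarith [hkey, hA.ge]
  · intro h
    have e1 : ((Real.pi : ℂ) - ω) * (z + Complex.I / 2) =
        (((Real.pi - ω) * z : ℝ) : ℂ) + (((Real.pi - ω) / 2 : ℝ) : ℂ) * Complex.I := by
      push_cast; ring
    have e2 : (Real.pi : ℂ) * (z + Complex.I / 2) =
        ((Real.pi * z : ℝ) : ℂ) + ((Real.pi / 2 : ℝ) : ℂ) * Complex.I := by
      push_cast; ring
    rw [e1, e2, aux_sinh_form, aux_sinh_form] at h
    have him := congrArg Complex.im h
    simp only [Complex.add_im, Complex.mul_im, Complex.ofReal_im, Complex.ofReal_re,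
      Complex.I_im, Complex.I_re, mul_zero, mul_one, zero_add, add_zero, zero_mul,
      Real.sin_pi_div_two] at him
    linarith [hkey, him.ge]
end

section
/- For every real z ≠ 0 and ω ∈ (0,2π), |sinh((π−ω)(z + i/2))| < |sinh(π(z + i/2))|, and hence the determinant 1 − sinh²((π−ω)y)/sinh²(πy) of the local symbol is nonzero for all y = z + i/2, z ∈ ℝ. -/
open Real Complex

lemma abs_sinh_sq (a z : ℝ) :
    ‖Complex.sinh ((a : ℂ) * (z + Complex.I / 2))‖ ^ 2 =
      Real.sinh (a * z) ^ 2 + Real.sin (a / 2) ^ 2 := by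
  have h : (a : ℂ) * (z + Complex.I / 2) = ((a * z : ℝ) : ℂ) + ((a / 2 : ℝ) : ℂ) * Complex.I := by
    push_cast; ring
  rw [h, Complex.sinh_add, Complex.sinh_mul_I, Complex.cosh_mul_I]
  have h2 : (Complex.sinh ((a * z : ℝ) : ℂ)) * (Complex.cos ((a / 2 : ℝ) : ℂ)) +
      (Complex.cosh ((a * z : ℝ) : ℂ)) * ((Complex.sin ((a / 2 : ℝ) : ℂ)) * Complex.I) =
      ((Real.sinh (a * z) * Real.cos (a / 2) : ℝ) : ℂ) +
        ((Real.cosh (a * z) * Real.sin (a / 2) : ℝ) : ℂ) * Complex.I := by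
    push_cast; ring
  rw [h2, Complex.sq_norm, Complex.normSq_add_mul_I]
  have hc := Real.sin_sq_add_cos_sq (a / 2)
  have hch := Real.cosh_sq (a * z)
  nlinarith [hch, hc]

/-- For every real `z ≠ 0` and `ω ∈ (0,2π)`,
`|sinh((π−ω)(z+i/2))| < |sinh(π(z+i/2))|`, and hence the determinant
`1 − sinh²((π−ω)y)/sinh²(πy)` of the local symbol is nonzero for all
`y = z + i/2`, `z ∈ ℝ`. -/
theorem stmt1 (ω : ℝ) (h1 : 0 < ω) (h2 : ω < 2 * Real.pi) :
    (∀ z : ℝ, z ≠ 0 →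
      ‖Complex.sinh (((Real.pi : ℂ) - ω) * (z + Complex.I / 2))‖ <
        ‖Complex.sinh ((Real.pi : ℂ) * (z + Complex.I / 2))‖) ∧
    (∀ z : ℝ,
      1 - (Complex.sinh (((Real.pi : ℂ) - ω) * (z + Complex.I / 2))) ^ 2 /
            (Complex.sinh ((Real.pi : ℂ) * (z + Complex.I / 2))) ^ 2 ≠ 0) := by
  have hπ : 0 < Real.pi := Real.pi_pos
  -- the key strict inequality, valid for all real z
  have key : ∀ z : ℝ,
      ‖Complex.sinh (((Real.pi : ℂ) - ω) * (z + Complex.I / 2))‖ <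
        ‖Complex.sinh ((Real.pi : ℂ) * (z + Complex.I / 2))‖ := by
    intro z
    have hcast : ((Real.pi : ℂ) - ω) = (((Real.pi - ω : ℝ)) : ℂ) := by push_cast; ring
    have hA := abs_sinh_sq (Real.pi - ω) z
    have hB := abs_sinh_sq Real.pi z
    rw [hcast]
    -- sinh part: |(π-ω)z| ≤ |πz|
    have habs : |(Real.pi - ω) * z| ≤ |Real.pi * z| := by
      rw [abs_mul, abs_mul]
      have : |Real.pi - ω| ≤ |Real.pi| := by
        rw [abs_of_pos hπ, abs_le]; constructor <;> linarith
      exact mul_le_mul_of_nonneg_right this (abs_nonneg z)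
    have hsinh : Real.sinh ((Real.pi - ω) * z) ^ 2 ≤ Real.sinh (Real.pi * z) ^ 2 := by
      have esq : ∀ x : ℝ, Real.sinh x ^ 2 = Real.sinh |x| ^ 2 := by
        intro x
        rcases abs_cases x with ⟨h, _⟩ | ⟨h, _⟩
        · rw [h]
        · rw [h, Real.sinh_neg, neg_sq]
      rw [esq ((Real.pi - ω) * z), esq (Real.pi * z)]
      have h0 : 0 ≤ Real.sinh |(Real.pi - ω) * z| := Real.sinh_nonneg_iff.mpr (abs_nonneg _)
      exact pow_le_pow_left₀ h0 (Real.sinh_le_sinh.mpr habs) 2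
    -- sin part: sin((π-ω)/2)² < 1 since cos((π-ω)/2) > 0
    have hcos : 0 < Real.cos ((Real.pi - ω) / 2) := by
      apply Real.cos_pos_of_mem_Ioo
      constructor
      · nlinarith
      · nlinarith
    have hsin : Real.sin ((Real.pi - ω) / 2) ^ 2 < 1 := by
      have := Real.sin_sq_add_cos_sq ((Real.pi - ω) / 2)
      nlinarith
    have hsq : ‖Complex.sinh (((Real.pi - ω : ℝ) : ℂ) * (z + Complex.I / 2))‖ ^ 2 <
        ‖Complex.sinh ((Real.pi : ℂ) * (z + Complex.I / 2))‖ ^ 2 := by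
      rw [hA, hB]
      have : Real.sin (Real.pi / 2) = 1 := Real.sin_pi_div_two
      rw [this]
      nlinarith
    have hnn : 0 ≤ ‖Complex.sinh ((Real.pi : ℂ) * (z + Complex.I / 2))‖ :=
      norm_nonneg _
    exact lt_of_pow_lt_pow_left₀ 2 hnn hsq
  refine ⟨fun z _ => key z, fun z => ?_⟩
  set s := Complex.sinh (((Real.pi : ℂ) - ω) * (z + Complex.I / 2)) with hs
  set S := Complex.sinh ((Real.pi : ℂ) * (z + Complex.I / 2)) with hS
  have hlt : ‖s‖ < ‖S‖ := key z
  have hS0 : S ≠ 0 := by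
    intro h
    rw [h, norm_zero] at hlt
    exact absurd hlt (not_lt.mpr (norm_nonneg s))
  intro h
  have heq : s ^ 2 = S ^ 2 := by
    field_simp at h
    linear_combination -h
  have habseq : ‖s‖ ^ 2 = ‖S‖ ^ 2 := by
    rw [← norm_pow, ← norm_pow, heq]
  have : ‖s‖ ^ 2 < ‖S‖ ^ 2 :=
    pow_lt_pow_left₀ hlt (norm_nonneg s) (by norm_num)
  linarith [habseq, this]
end

section
/- If (A_n) is a sequence of bounded operators on a Hilbert space H with orthogonal projections P_n → I strongly, and there exist n₀ and C such that A_n P_n : Im P_n → Im P_n is invertible with ‖(A_n P_n)^{-1} P_n‖ ≤ C for all n ≥ n₀, and A_n P_n → A strongly, then A is injective and has closed range; if additionally A_n* P_n → A* strongly then A is invertible with ‖A^{-1}‖ ≤ C. -/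
open Filter ContinuousLinearMap

/-- Polski-type theorem: if `(A_n)` are bounded operators on a Hilbert space
`H`, `P_n` orthogonal projections converging strongly to `I`, the operators
`A_n P_n : Im P_n → Im P_n` are invertible for `n ≥ n₀` with inverses `B_n`
(`= P_n B_n P_n`) uniformly bounded by `C`, and `A_n P_n → A` strongly, then
`A` is injective with closed range; if additionally `A_n* P_n → A*` strongly,
then `A` is invertible with `‖A⁻¹‖ ≤ C`. -/
theorem stmt17 {H : Type*} [NormedAddCommGroup H] [InnerProductSpace ℂ H]
    [CompleteSpace H]
    (P A B : ℕ → H →L[ℂ] H) (Alim : H →L[ℂ] H) (n₀ : ℕ) (C : ℝ)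
    (hidem : ∀ n, (P n).comp (P n) = P n)
    (hsa : ∀ n, ContinuousLinearMap.adjoint (P n) = P n)
    (hP : ∀ x : H, Filter.Tendsto (fun n => P n x) Filter.atTop (nhds x))
    (hrange : ∀ n, (P n).comp ((A n).comp (P n)) = (A n).comp (P n))
    (hB : ∀ n ≥ n₀,
      (P n).comp ((B n).comp (P n)) = B n ∧
      (B n).comp ((A n).comp (P n)) = P n ∧
      (P n).comp ((A n).comp (B n)) = P n ∧
      ‖B n‖ ≤ C)
    (hconv : ∀ x : H,
      Filter.Tendsto (fun n => (A n) (P n x)) Filter.atTop (nhds (Alim x))) :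
    (Function.Injective Alim ∧ IsClosed (Set.range Alim)) ∧
    ((∀ x : H,
        Filter.Tendsto (fun n => (ContinuousLinearMap.adjoint (A n)) (P n x))
          Filter.atTop (nhds ((ContinuousLinearMap.adjoint Alim) x))) →
      ∃ Ai : H →L[ℂ] H,
        Ai.comp Alim = ContinuousLinearMap.id ℂ H ∧
        Alim.comp Ai = ContinuousLinearMap.id ℂ H ∧ ‖Ai‖ ≤ C) := by
  have hC : 0 ≤ C := le_trans (norm_nonneg (B n₀)) (hB n₀ le_rfl).2.2.2
  -- Key estimate: ‖x‖ ≤ C * ‖Alim x‖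
  have key : ∀ x : H, ‖x‖ ≤ C * ‖Alim x‖ := by
    intro x
    have h1 : Tendsto (fun n => ‖P n x‖) atTop (nhds ‖x‖) := (hP x).norm
    have h2 : Tendsto (fun n => C * ‖A n (P n x)‖) atTop (nhds (C * ‖Alim x‖)) :=
      ((hconv x).norm).const_mul C
    refine le_of_tendsto_of_tendsto h1 h2 (eventually_atTop.2 ⟨n₀, fun n hn => ?_⟩)
    have hBA := (hB n hn).2.1
    have hx : (B n) ((A n) ((P n) x)) = P n x := by
      have := congrArg (fun T : H →L[ℂ] H => T x) hBA
      simpa using this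
    calc ‖P n x‖ = ‖(B n) ((A n) ((P n) x))‖ := by rw [hx]
      _ ≤ ‖B n‖ * ‖(A n) ((P n) x)‖ := (B n).le_opNorm _
      _ ≤ C * ‖(A n) ((P n) x)‖ :=
        mul_le_mul_of_nonneg_right (hB n hn).2.2.2 (norm_nonneg _)
  have hinj : Function.Injective Alim := by
    intro x y hxy
    have h0 : Alim (x - y) = 0 := by simp [map_sub, hxy]
    have := key (x - y)
    rw [h0] at this
    have hn0 : ‖x - y‖ = 0 := le_antisymm (by simpa using this) (norm_nonneg _)
    exact sub_eq_zero.1 (norm_eq_zero.1 hn0)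
  have hanti : AntilipschitzWith (Real.toNNReal C) Alim :=
    Alim.antilipschitz_of_bound fun x => by
      simpa [Real.coe_toNNReal C hC] using key x
  have hclosed : IsClosed (Set.range Alim) :=
    hanti.isClosed_range Alim.uniformContinuous
  refine ⟨⟨hinj, hclosed⟩, fun hconv' => ?_⟩
  -- adjoint estimate
  have key' : ∀ x : H, ‖x‖ ≤ C * ‖(ContinuousLinearMap.adjoint Alim) x‖ := by
    intro x
    have h1 : Tendsto (fun n => ‖P n x‖) atTop (nhds ‖x‖) := (hP x).norm
    have h2 : Tendsto (fun n => C * ‖(ContinuousLinearMap.adjoint (A n)) (P n x)‖)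
        atTop (nhds (C * ‖(ContinuousLinearMap.adjoint Alim) x‖)) :=
      ((hconv' x).norm).const_mul C
    refine le_of_tendsto_of_tendsto h1 h2 (eventually_atTop.2 ⟨n₀, fun n hn => ?_⟩)
    have hPAB := (hB n hn).2.2.1
    have hadj : ((ContinuousLinearMap.adjoint (B n)).comp
        ((ContinuousLinearMap.adjoint (A n)).comp (P n))) = P n := by
      have := congrArg ContinuousLinearMap.adjoint hPAB
      rwa [ContinuousLinearMap.adjoint_comp, ContinuousLinearMap.adjoint_comp,
        hsa n, ContinuousLinearMap.comp_assoc] at this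
    have hx : (ContinuousLinearMap.adjoint (B n))
        ((ContinuousLinearMap.adjoint (A n)) ((P n) x)) = P n x := by
      have := congrArg (fun T : H →L[ℂ] H => T x) hadj
      simpa using this
    have hnB : ‖ContinuousLinearMap.adjoint (B n)‖ ≤ C := by
      rw [show ‖ContinuousLinearMap.adjoint (B n)‖ = ‖B n‖ from
        (ContinuousLinearMap.adjoint : (H →L[ℂ] H) ≃ₗᵢ⋆[ℂ] (H →L[ℂ] H)).norm_map (B n)]
      exact (hB n hn).2.2.2
    calc ‖P n x‖ = ‖(ContinuousLinearMap.adjoint (B n))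
          ((ContinuousLinearMap.adjoint (A n)) ((P n) x))‖ := by rw [hx]
      _ ≤ ‖ContinuousLinearMap.adjoint (B n)‖ *
          ‖(ContinuousLinearMap.adjoint (A n)) ((P n) x)‖ :=
        (ContinuousLinearMap.adjoint (B n)).le_opNorm _
      _ ≤ C * ‖(ContinuousLinearMap.adjoint (A n)) ((P n) x)‖ :=
        mul_le_mul_of_nonneg_right hnB (norm_nonneg _)
  -- surjectivity
  have hsurj : Function.Surjective Alim := by
    set S : Submodule ℂ H := LinearMap.range (Alim : H →ₗ[ℂ] H) with hS
    have hSc : IsClosed (S : Set H) := by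
      simpa [hS, Set.range, LinearMap.coe_range] using hclosed
    haveI : CompleteSpace S := hSc.completeSpace_coe
    have hbot : Sᗮ = ⊥ := by
      rw [Submodule.eq_bot_iff]
      intro y hy
      have hAy : (ContinuousLinearMap.adjoint Alim) y = 0 := by
        have h0 : (inner ℂ ((ContinuousLinearMap.adjoint Alim) y)
            ((ContinuousLinearMap.adjoint Alim) y) : ℂ) = 0 := by
          rw [ContinuousLinearMap.adjoint_inner_left]
          have hmem : Alim ((ContinuousLinearMap.adjoint Alim) y) ∈ S :=
            LinearMap.mem_range_self _ _
          have := (Submodule.mem_orthogonal S y).1 hy _ hmem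
          rw [← inner_conj_symm, this, map_zero]
        exact inner_self_eq_zero.1 h0
      have := key' y
      rw [hAy, norm_zero, mul_zero] at this
      exact norm_le_zero_iff.1 this
    have hStop : S = ⊤ := Submodule.orthogonal_eq_bot_iff.1 hbot
    intro y
    have : y ∈ S := hStop ▸ Submodule.mem_top
    exact this
  -- build the inverse
  have hbij : Function.Bijective Alim := ⟨hinj, hsurj⟩
  let e : H ≃ₗ[ℂ] H := LinearEquiv.ofBijective Alim.toLinearMap hbij
  have hsymm : ∀ y : H, Alim (e.symm y) = y := fun y => e.apply_symm_apply y
  have hbound : ∀ y : H, ‖e.symm y‖ ≤ C * ‖y‖ := fun y => by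
    have := key (e.symm y); rwa [hsymm y] at this
  let Ai : H →L[ℂ] H := LinearMap.mkContinuous (e.symm : H →ₗ[ℂ] H) C hbound
  refine ⟨Ai, ?_, ?_, LinearMap.mkContinuous_norm_le _ hC _⟩
  · ext x
    simp only [ContinuousLinearMap.coe_comp', Function.comp_apply,
      ContinuousLinearMap.id_apply]
    show e.symm (Alim x) = x
    exact e.symm_apply_apply x
  · ext x
    simp only [ContinuousLinearMap.coe_comp', Function.comp_apply,
      ContinuousLinearMap.id_apply]
    exact hsymm x
end

section
/- The set G of all bounded sequences (G_n) of operators G_n : Im P_n → Im P_n with ‖G_n‖ → 0 forms a closed two-sided ideal in the C*-algebra T of all bounded sequences (A_n) with norm ‖(A_n)‖ = sup_n ‖A_n‖; and a sequence (A_n) ∈ T is stable if and only if the coset (A_n) + G is invertible in the quotient C*-algebra T/G. -/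
open Filter ContinuousLinearMap

section Aux

lemma corner_half {R : Type*} [NormedRing R] [CompleteSpace R]
    (h1 : ‖(1 : R)‖ ≤ 1) (p a b : R) (hp : p * p = p)
    (pa : p * a = a) (bp : b * p = b)
    (hab : ‖a * b - p‖ ≤ 1 / 2) :
    ∃ e : R, p * e = e ∧ e * p = e ∧ ‖e‖ ≤ 1 ∧ a * (b * (p + e)) = p := by
  obtain ⟨d, hd⟩ : ∃ d, d = a * b - p := ⟨_, rfl⟩
  have habd : a * b = p + d := by rw [hd]; abel
  have pd : p * d = d := by rw [hd, mul_sub, ← mul_assoc, pa, hp]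
  have dp : d * p = d := by rw [hd, sub_mul, mul_assoc, bp, hp]
  have hdn : ‖d‖ ≤ 1 / 2 := hd ▸ hab
  have hdlt : ‖-d‖ < 1 := by rw [norm_neg]; linarith
  obtain ⟨v, hv⟩ : ∃ v : R, v = ((Units.oneSub (-d) hdlt)⁻¹ : Rˣ) := ⟨_, rfl⟩
  have huval : ((Units.oneSub (-d) hdlt : Rˣ) : R) = 1 + d := by
    simp [Units.oneSub, sub_neg_eq_add]
  have hv1 : (1 + d) * v = 1 := by rw [← huval, hv, Units.mul_inv]
  have hv2 : v * (1 + d) = 1 := by rw [← huval, hv, Units.inv_mul]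
  obtain ⟨e, he⟩ : ∃ e, e = v - 1 := ⟨_, rfl⟩
  have hve : v = 1 + e := by rw [he]; abel
  have hd1p : (1 + d) * (1 - p) = 1 - p := by
    rw [mul_sub, mul_one, add_mul, one_mul, dp]; abel
  have h1pd : (1 - p) * (1 + d) = 1 - p := by
    rw [sub_mul, one_mul, mul_add, mul_one, pd]; abel
  have hv1p : v * (1 - p) = 1 - p := by
    calc v * (1 - p) = v * ((1 + d) * (1 - p)) := by rw [hd1p]
    _ = (v * (1 + d)) * (1 - p) := by rw [mul_assoc]
    _ = 1 - p := by rw [hv2, one_mul]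
  have h1pv : (1 - p) * v = 1 - p := by
    calc (1 - p) * v = ((1 - p) * (1 + d)) * v := by rw [h1pd]
    _ = (1 - p) * ((1 + d) * v) := by rw [mul_assoc]
    _ = 1 - p := by rw [hv1, mul_one]
  have ep : e * p = e := by
    have h : v * p = v - v * (1 - p) := by rw [mul_sub, mul_one]; abel
    rw [he, sub_mul, one_mul, h, hv1p]; abel
  have pe : p * e = e := by
    have h : p * v = v - (1 - p) * v := by rw [sub_mul, one_mul]; abel
    rw [he, mul_sub, mul_one, h, h1pv]; abel
  have hedv : e = -(d * v) := by
    have h : v + d * v = 1 := by rw [← hv1, add_mul, one_mul]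
    rw [he, ← h]; abel
  have hne : ‖e‖ ≤ 1 := by
    have h2 : ‖e‖ ≤ ‖d‖ * ‖v‖ := by rw [hedv, norm_neg]; exact norm_mul_le _ _
    have h3 : ‖v‖ ≤ ‖(1 : R)‖ + ‖e‖ := by rw [hve]; exact norm_add_le _ _
    nlinarith [norm_nonneg d, norm_nonneg e, norm_nonneg v]
  have key : d + e + d * e = 0 := by
    have h : (1 + d) * (1 + e) = 1 := by rw [← hve]; exact hv1
    have hexp : (1 + d) * (1 + e) = 1 + (d + e + d * e) := by
      rw [mul_add, mul_one, add_mul, one_mul]; abel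
    have h2 : (1 : R) + (d + e + d * e) = 1 + 0 := by
      rw [add_zero, ← hexp]; exact h
    exact add_left_cancel h2
  refine ⟨e, pe, ep, hne, ?_⟩
  calc a * (b * (p + e)) = (p + d) * (p + e) := by rw [← mul_assoc, habd]
  _ = p + (d + e + d * e) := by rw [mul_add, add_mul, add_mul, hp, pe, dp]; abel
  _ = p := by rw [key, add_zero]

open MulOpposite in
lemma corner_half_left {R : Type*} [NormedRing R] [CompleteSpace R]
    (h1 : ‖(1 : R)‖ ≤ 1) (p a b : R) (hp : p * p = p)
    (ap : a * p = a) (pb : p * b = b)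
    (hba : ‖b * a - p‖ ≤ 1 / 2) :
    ∃ e : R, p * e = e ∧ e * p = e ∧ ‖e‖ ≤ 1 ∧ ((p + e) * b) * a = p := by
  obtain ⟨e', pe', ep', hne', hkey⟩ :=
    corner_half (R := Rᵐᵒᵖ) (by rw [← op_one, norm_op]; exact h1) (op p) (op a) (op b)
      (by rw [← op_mul, hp]) (by rw [← op_mul, ap]) (by rw [← op_mul, pb])
      (by rw [← op_mul, ← op_sub, norm_op]; exact hba)
  refine ⟨unop e', ?_, ?_, ?_, ?_⟩
  · have := congrArg unop ep'
    simpa using this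
  · have := congrArg unop pe'
    simpa using this
  · rw [← norm_op, op_unop]; exact hne'
  · have := congrArg unop hkey
    simpa [mul_assoc] using this

lemma corner_inv {R : Type*} [NormedRing R] [CompleteSpace R]
    (h1 : ‖(1 : R)‖ ≤ 1) (p a b : R) (hp : p * p = p)
    (pa : p * a = a) (ap : a * p = a) (pb : p * b = b) (bp : b * p = b)
    (hab : ‖a * b - p‖ ≤ 1 / 2) (hba : ‖b * a - p‖ ≤ 1 / 2) :
    ∃ c : R, p * c = c ∧ c * p = c ∧ c * a = p ∧ a * c = p ∧
      ‖c‖ ≤ ‖b‖ * (‖p‖ + 1) := by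
  obtain ⟨e, pe, ep, hne, hkey⟩ := corner_half h1 p a b hp pa bp hab
  obtain ⟨f, pf, fp, hnf, hkey'⟩ := corner_half_left h1 p a b hp ap pb hba
  set c := b * (p + e) with hc
  set c' := (p + f) * b with hc'
  have hac : a * c = p := by rw [hc]; exact hkey
  have hca' : c' * a = p := by rw [hc']; exact hkey'
  have pc : p * c = c := by rw [hc, ← mul_assoc, pb]
  have cp : c * p = c := by
    rw [hc, mul_assoc, add_mul, hp, ep]
  have c'p : c' * p = c' := by rw [hc', mul_assoc, bp]
  have hcc' : c' = c := by
    calc c' = c' * p := c'p.symm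
    _ = c' * (a * c) := by rw [hac]
    _ = (c' * a) * c := (mul_assoc c' a c).symm
    _ = p * c := by rw [hca']
    _ = c := pc
  have hca : c * a = p := by rw [← hcc']; exact hca'
  refine ⟨c, pc, cp, hca, hac, ?_⟩
  calc ‖c‖ ≤ ‖b‖ * ‖p + e‖ := norm_mul_le _ _
  _ ≤ ‖b‖ * (‖p‖ + ‖e‖) := by
      exact mul_le_mul_of_nonneg_left (norm_add_le _ _) (norm_nonneg _)
  _ ≤ ‖b‖ * (‖p‖ + 1) := by
      exact mul_le_mul_of_nonneg_left (by linarith) (norm_nonneg _)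

end Aux

/-- The algebra `T` of bounded sequences of operators acting on `Im P_n`
(encoded as operators `A_n` on `H` with `P_n A_n P_n = A_n`), with sup-norm
bound. -/
def memT {H : Type*} [NormedAddCommGroup H] [InnerProductSpace ℂ H]
    [CompleteSpace H] (P A : ℕ → H →L[ℂ] H) : Prop :=
  (∀ n, (P n).comp ((A n).comp (P n)) = A n) ∧ ∃ C : ℝ, ∀ n, ‖A n‖ ≤ C

/-- The set `G` of bounded sequences with `‖G_n‖ → 0`. -/
def memG {H : Type*} [NormedAddCommGroup H] [InnerProductSpace ℂ H]
    [CompleteSpace H] (P A : ℕ → H →L[ℂ] H) : Prop :=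
  memT P A ∧ Filter.Tendsto (fun n => ‖A n‖) Filter.atTop (nhds 0)

/-- Stability of a sequence: for `n ≥ n₀` the operators `A_n : Im P_n → Im P_n`
are invertible (the identity on `Im P_n` being `P_n`) with uniformly bounded
inverses. -/
def stableSeq {H : Type*} [NormedAddCommGroup H] [InnerProductSpace ℂ H]
    [CompleteSpace H] (P A : ℕ → H →L[ℂ] H) : Prop :=
  ∃ n₀ : ℕ, ∃ C : ℝ, ∀ n ≥ n₀, ∃ B : H →L[ℂ] H,
    (P n).comp (B.comp (P n)) = B ∧
    B.comp (A n) = P n ∧ (A n).comp B = P n ∧ ‖B‖ ≤ C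

/-- `G` is a closed two-sided ideal of the C*-algebra `T` of bounded operator
sequences, and a sequence `(A_n) ∈ T` is stable iff its coset `(A_n) + G` is
invertible in `T/G`, i.e. iff `(A_n)` is invertible modulo `G` (there is
`(B_n) ∈ T` with `‖A_n B_n − P_n‖ → 0` and `‖B_n A_n − P_n‖ → 0`). -/
theorem stmt18 {H : Type*} [NormedAddCommGroup H] [InnerProductSpace ℂ H]
    [CompleteSpace H] (P : ℕ → H →L[ℂ] H)
    (hidem : ∀ n, (P n).comp (P n) = P n)
    (hsa : ∀ n, ContinuousLinearMap.adjoint (P n) = P n)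
    (hP : ∀ x : H, Filter.Tendsto (fun n => P n x) Filter.atTop (nhds x)) :
    (∀ A G : ℕ → H →L[ℂ] H, memT P A → memG P G →
      memG P (fun n => (A n).comp (G n)) ∧ memG P (fun n => (G n).comp (A n))) ∧
    (∀ G₁ G₂ : ℕ → H →L[ℂ] H, memG P G₁ → memG P G₂ →
      memG P (fun n => G₁ n + G₂ n)) ∧
    (∀ A : ℕ → H →L[ℂ] H, memT P A →
      (∀ δ : ℝ, 0 < δ → ∃ G : ℕ → H →L[ℂ] H, memG P G ∧ ∀ n, ‖A n - G n‖ ≤ δ) →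
      memG P A) ∧
    (∀ A : ℕ → H →L[ℂ] H, memT P A →
      (stableSeq P A ↔ ∃ B : ℕ → H →L[ℂ] H, memT P B ∧
        Filter.Tendsto (fun n => ‖(A n).comp (B n) - P n‖) Filter.atTop (nhds 0) ∧
        Filter.Tendsto (fun n => ‖(B n).comp (A n) - P n‖) Filter.atTop (nhds 0))) := by
  -- basic facts
  have hpp : ∀ n, P n * P n = P n := hidem
  have corner_left : ∀ (n : ℕ) (X : H →L[ℂ] H),
      P n * (X * P n) = X → P n * X = X := by
    intro n X h
    calc P n * X = P n * (P n * (X * P n)) := by rw [h]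
    _ = (P n * P n) * (X * P n) := (mul_assoc _ _ _).symm
    _ = P n * (X * P n) := by rw [hpp n]
    _ = X := h
  have corner_right : ∀ (n : ℕ) (X : H →L[ℂ] H),
      P n * (X * P n) = X → X * P n = X := by
    intro n X h
    calc X * P n = (P n * (X * P n)) * P n := by rw [h]
    _ = P n * ((X * P n) * P n) := mul_assoc _ _ _
    _ = P n * (X * (P n * P n)) := by rw [mul_assoc]
    _ = P n * (X * P n) := by rw [hpp n]
    _ = X := h
  have h1 : ‖(1 : H →L[ℂ] H)‖ ≤ 1 := norm_id_le
  have hPn : ∀ n, ‖P n‖ ≤ 1 := by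
    intro n
    have hsq : ‖P n‖ * ‖P n‖ = ‖P n‖ := by
      rw [← norm_adjoint_comp_self (P n), hsa n, hidem n]
    nlinarith [norm_nonneg (P n)]
  refine ⟨?_, ?_, ?_, ?_⟩
  · -- ideal property
    rintro A G ⟨hAc, CA, hAb⟩ ⟨⟨hGc, CG, hGb⟩, hGt⟩
    have hCA0 : 0 ≤ CA := le_trans (norm_nonneg _) (hAb 0)
    have hCG0 : 0 ≤ CG := le_trans (norm_nonneg _) (hGb 0)
    constructor
    · refine ⟨⟨?_, CA * CG, ?_⟩, ?_⟩
      · intro n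
        show P n * ((A n * G n) * P n) = A n * G n
        have hGp : G n * P n = G n := corner_right n (G n) (hGc n)
        have hpA : P n * A n = A n := corner_left n (A n) (hAc n)
        calc P n * ((A n * G n) * P n) = P n * (A n * (G n * P n)) := by
              rw [mul_assoc]
        _ = (P n * A n) * (G n * P n) := (mul_assoc _ _ _).symm
        _ = A n * G n := by rw [hGp, hpA]
      · intro n
        calc ‖(A n).comp (G n)‖ ≤ ‖A n‖ * ‖G n‖ := opNorm_comp_le _ _
        _ ≤ CA * CG := mul_le_mul (hAb n) (hGb n) (norm_nonneg _) hCA0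
      · apply squeeze_zero (fun n => norm_nonneg _)
          (g := fun n => CA * ‖G n‖)
          (fun n => le_trans (opNorm_comp_le _ _)
            (mul_le_mul_of_nonneg_right (hAb n) (norm_nonneg _)))
        simpa using hGt.const_mul CA
    · refine ⟨⟨?_, CG * CA, ?_⟩, ?_⟩
      · intro n
        show P n * ((G n * A n) * P n) = G n * A n
        have hpG : P n * G n = G n := corner_left n (G n) (hGc n)
        have hAp : A n * P n = A n := corner_right n (A n) (hAc n)
        calc P n * ((G n * A n) * P n) = P n * (G n * (A n * P n)) := by
              rw [mul_assoc]
        _ = (P n * G n) * (A n * P n) := (mul_assoc _ _ _).symm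
        _ = G n * A n := by rw [hpG, hAp]
      · intro n
        calc ‖(G n).comp (A n)‖ ≤ ‖G n‖ * ‖A n‖ := opNorm_comp_le _ _
        _ ≤ CG * CA := mul_le_mul (hGb n) (hAb n) (norm_nonneg _) hCG0
      · apply squeeze_zero (fun n => norm_nonneg _)
          (g := fun n => ‖G n‖ * CA)
          (fun n => le_trans (opNorm_comp_le _ _)
            (mul_le_mul_of_nonneg_left (hAb n) (norm_nonneg _)))
        simpa using hGt.mul_const CA
  · -- closed under addition
    rintro G₁ G₂ ⟨⟨hG1c, C1, hG1b⟩, hG1t⟩ ⟨⟨hG2c, C2, hG2b⟩, hG2t⟩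
    refine ⟨⟨?_, C1 + C2, ?_⟩, ?_⟩
    · intro n
      show P n * ((G₁ n + G₂ n) * P n) = G₁ n + G₂ n
      have e1 : P n * (G₁ n * P n) = G₁ n := hG1c n
      have e2 : P n * (G₂ n * P n) = G₂ n := hG2c n
      rw [add_mul, mul_add, e1, e2]
    · intro n
      exact le_trans (norm_add_le _ _) (add_le_add (hG1b n) (hG2b n))
    · apply squeeze_zero (fun n => norm_nonneg _)
        (g := fun n => ‖G₁ n‖ + ‖G₂ n‖) (fun n => norm_add_le _ _)
      simpa using hG1t.add hG2t
  · -- closedness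
    rintro A hA happ
    refine ⟨hA, ?_⟩
    rw [Metric.tendsto_atTop]
    intro ε hε
    obtain ⟨G, ⟨hGT, hGt⟩, hGd⟩ := happ (ε / 2) (by linarith)
    obtain ⟨N, hN⟩ := Metric.tendsto_atTop.mp hGt (ε / 2) (by linarith)
    refine ⟨N, fun n hn => ?_⟩
    have h1' : ‖G n‖ < ε / 2 := by
      have := hN n hn
      rw [Real.dist_eq, sub_zero] at this
      exact lt_of_le_of_lt (le_abs_self _) this
    have h2' : ‖A n‖ ≤ ‖A n - G n‖ + ‖G n‖ := by
      calc ‖A n‖ = ‖(A n - G n) + G n‖ := by rw [sub_add_cancel]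
      _ ≤ ‖A n - G n‖ + ‖G n‖ := norm_add_le _ _
    rw [Real.dist_eq, sub_zero, abs_of_nonneg (norm_nonneg _)]
    have := hGd n
    linarith
  · -- stability criterion
    rintro A ⟨hAc, CA, hAb⟩
    constructor
    · rintro ⟨n₀, C, hst⟩
      classical
      refine ⟨fun n => if h : n₀ ≤ n then (hst n h).choose else 0, ⟨?_, max C 0, ?_⟩,
        ?_, ?_⟩
      · intro n
        by_cases h : n₀ ≤ n
        · simp only [dif_pos h]
          exact (hst n h).choose_spec.1
        · simp [dif_neg h]
      · intro n
        by_cases h : n₀ ≤ n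
        · simp only [dif_pos h]
          exact le_trans (hst n h).choose_spec.2.2.2 (le_max_left _ _)
        · simp [dif_neg h]
      · have hev : (fun _ : ℕ => (0 : ℝ)) =ᶠ[atTop]
            fun n => ‖(A n).comp (if h : n₀ ≤ n then (hst n h).choose else 0) - P n‖ := by
          refine eventually_atTop.2 ⟨n₀, fun n hn => ?_⟩
          simp only [dif_pos hn, (hst n hn).choose_spec.2.2.1, sub_self, norm_zero]
        exact tendsto_const_nhds.congr' hev
      · have hev : (fun _ : ℕ => (0 : ℝ)) =ᶠ[atTop]
            fun n => ‖(if h : n₀ ≤ n then (hst n h).choose else 0).comp (A n) - P n‖ := by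
          refine eventually_atTop.2 ⟨n₀, fun n hn => ?_⟩
          simp only [dif_pos hn, (hst n hn).choose_spec.2.1, sub_self, norm_zero]
        exact tendsto_const_nhds.congr' hev
    · rintro ⟨B, ⟨hBc, CB, hBb⟩, hABt, hBAt⟩
      have hCB0 : 0 ≤ CB := le_trans (norm_nonneg _) (hBb 0)
      obtain ⟨N₁, hN₁⟩ := Metric.tendsto_atTop.mp hABt (1 / 2) (by norm_num)
      obtain ⟨N₂, hN₂⟩ := Metric.tendsto_atTop.mp hBAt (1 / 2) (by norm_num)
      refine ⟨max N₁ N₂, CB * (1 + 1), fun n hn => ?_⟩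
      have hn₁ : N₁ ≤ n := le_trans (le_max_left _ _) hn
      have hn₂ : N₂ ≤ n := le_trans (le_max_right _ _) hn
      have hab : ‖A n * B n - P n‖ ≤ 1 / 2 := by
        have := hN₁ n hn₁
        rw [Real.dist_eq, sub_zero] at this
        exact le_of_lt (lt_of_le_of_lt (le_abs_self _) this)
      have hba : ‖B n * A n - P n‖ ≤ 1 / 2 := by
        have := hN₂ n hn₂
        rw [Real.dist_eq, sub_zero] at this
        exact le_of_lt (lt_of_le_of_lt (le_abs_self _) this)
      obtain ⟨c, pc, cp, hca, hac, hnc⟩ := corner_inv h1 (P n) (A n) (B n) (hpp n)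
        (corner_left n (A n) (hAc n)) (corner_right n (A n) (hAc n))
        (corner_left n (B n) (hBc n)) (corner_right n (B n) (hBc n)) hab hba
      refine ⟨c, ?_, hca, hac, ?_⟩
      · show P n * (c * P n) = c
        rw [cp, pc]
      · calc ‖c‖ ≤ ‖B n‖ * (‖P n‖ + 1) := hnc
        _ ≤ CB * (1 + 1) := mul_le_mul (hBb n) (by linarith [hPn n])
            (by linarith [norm_nonneg (P n)]) hCB0
end

section
/- Let K ∈ 𝒦(H) be compact and (G_n) with ‖G_n‖ → 0. Then the family J = {(P_n K P_n + G_n) : K compact, ‖G_n‖ → 0} is a closed two-sided ideal of the C*-algebra A of all bounded sequences (A_n) for which both strong limits s-lim A_n P_n = A and s-lim A_n* P_n = A* exist. -/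
open Filter ContinuousLinearMap

/-- The C*-algebra `A` of bounded sequences possessing both strong limits
`s-lim A_n P_n = L` and `s-lim A_n* P_n = L*`. -/
def memA {H : Type*} [NormedAddCommGroup H] [InnerProductSpace ℂ H]
    [CompleteSpace H] (P A : ℕ → H →L[ℂ] H) : Prop :=
  memT P A ∧ ∃ L : H →L[ℂ] H,
    (∀ x : H, Filter.Tendsto (fun n => (A n) (P n x)) Filter.atTop (nhds (L x))) ∧
    (∀ x : H, Filter.Tendsto (fun n => (ContinuousLinearMap.adjoint (A n)) (P n x))
      Filter.atTop (nhds ((ContinuousLinearMap.adjoint L) x)))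

/-- The family `J` of sequences of the form `(P_n K P_n + G_n)` with `K`
compact and `‖G_n‖ → 0`. -/
def memJ {H : Type*} [NormedAddCommGroup H] [InnerProductSpace ℂ H]
    [CompleteSpace H] (P A : ℕ → H →L[ℂ] H) : Prop :=
  ∃ K : H →L[ℂ] H, IsCompactOperator (⇑K) ∧
    ∃ G : ℕ → H →L[ℂ] H, memG P G ∧
      ∀ n, A n = (P n).comp (K.comp (P n)) + G n


set_option linter.unusedSectionVars false
set_option maxHeartbeats 1600000

open Filter ContinuousLinearMap Metric

section AuxLemmas

variable {H : Type*} [NormedAddCommGroup H] [InnerProductSpace ℂ H] [CompleteSpace H]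

local notation "⟪" x ", " y "⟫" => @inner ℂ _ _ x y

lemma proj_norm_apply_le (P : H →L[ℂ] H) (hid : P.comp P = P)
    (hsa : ContinuousLinearMap.adjoint P = P) (x : H) : ‖P x‖ ≤ ‖x‖ := by
  have hPP : ∀ y, P (P y) = P y := fun y => by
    have := ContinuousLinearMap.ext_iff.mp hid y
    simpa using this
  have h1 : ⟪P x, P x⟫ = ⟪x, P x⟫ := by
    nth_rewrite 1 [← hsa]
    rw [adjoint_inner_left, hPP]
  have h2 : ‖P x‖ ^ 2 ≤ ‖x‖ * ‖P x‖ := by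
    have := @inner_self_eq_norm_sq ℂ _ _ _ _ (P x)
    rw [← this, h1]
    calc RCLike.re ⟪x, P x⟫ ≤ ‖⟪x, P x⟫‖ := RCLike.re_le_norm _
      _ ≤ ‖x‖ * ‖P x‖ := norm_inner_le_norm _ _
  rcases eq_or_lt_of_le (norm_nonneg (P x)) with h | h
  · rw [← h]; exact norm_nonneg x
  · have := h2
    rw [pow_two] at this
    exact le_of_mul_le_mul_right (by linarith [this]) h

lemma tendsto_P_apply (P : ℕ → H →L[ℂ] H) (hn : ∀ n x, ‖P n x‖ ≤ ‖x‖)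
    (hP : ∀ x : H, Tendsto (fun n => P n x) atTop (nhds x))
    {y : ℕ → H} {z : H} (hy : Tendsto y atTop (nhds z)) :
    Tendsto (fun n => P n (y n)) atTop (nhds z) := by
  rw [tendsto_iff_norm_sub_tendsto_zero] at hy ⊢
  have key : ∀ n, ‖P n (y n) - z‖ ≤ ‖y n - z‖ + ‖P n z - z‖ := by
    intro n
    have : P n (y n) - z = P n (y n - z) + (P n z - z) := by
      rw [map_sub]; abel
    rw [this]
    exact (norm_add_le _ _).trans (by gcongr; exact hn n _)
  have hz : Tendsto (fun n => ‖P n z - z‖) atTop (nhds 0) := by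
    have := (hP z)
    rwa [tendsto_iff_norm_sub_tendsto_zero] at this
  have : Tendsto (fun n => ‖y n - z‖ + ‖P n z - z‖) atTop (nhds 0) := by
    simpa using hy.add hz
  exact squeeze_zero (fun n => norm_nonneg _) key this

lemma opNorm_le_of_strong (B : H →L[ℂ] H) (f : ℕ → H →L[ℂ] H) (c : ℝ) (hc : 0 ≤ c)
    (hb : ∀ n, ‖f n‖ ≤ c)
    (h : ∀ x, Tendsto (fun n => f n x) atTop (nhds (B x))) : ‖B‖ ≤ c := by
  refine ContinuousLinearMap.opNorm_le_bound B hc (fun x => ?_)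
  have h1 : Tendsto (fun n => ‖f n x‖) atTop (nhds ‖B x‖) := (h x).norm
  exact le_of_tendsto h1 (Eventually.of_forall fun n =>
    ((f n).le_opNorm x).trans (by gcongr; exact hb n))

/-- If `T n → 0` strongly and uniformly bounded, and `K` is compact, then `‖T n ∘ K‖ → 0`. -/
lemma norm_comp_compact_tendsto_zero (T : ℕ → H →L[ℂ] H) (K : H →L[ℂ] H)
    (hK : IsCompactOperator (⇑K)) (M : ℝ) (hM : ∀ n, ‖T n‖ ≤ M)
    (h : ∀ x, Tendsto (fun n => T n x) atTop (nhds 0)) :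
    Tendsto (fun n => ‖(T n).comp K‖) atTop (nhds 0) := by
  have hM0 : 0 ≤ M := le_trans (norm_nonneg _) (hM 0)
  rw [Metric.tendsto_atTop]
  intro ε hε
  set ε' : ℝ := ε / (2 * (M + 2)) with hε'def
  have hε' : 0 < ε' := by positivity
  obtain ⟨C, hC, hKC⟩ := hK.image_closedBall_subset_compact (𝕜₁ := ℂ) 1
  have htb : TotallyBounded C := hC.totallyBounded
  obtain ⟨t, htfin, hcover⟩ := Metric.totallyBounded_iff.1 htb ε' hε'
  have hev : ∀ᶠ n in atTop, ∀ y ∈ t, ‖T n y‖ < ε' := by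
    rw [eventually_all_finite htfin]
    intro y _
    have := (h y).norm
    simp only [norm_zero] at this
    exact this.eventually (eventually_lt_nhds hε')
  obtain ⟨N, hN⟩ := eventually_atTop.1 hev
  refine ⟨N, fun n hn => ?_⟩
  have hsmall : ∀ y ∈ t, ‖T n y‖ < ε' := hN n hn
  have hball : ∀ x : H, ‖x‖ ≤ 1 → ‖(T n) (K x)‖ ≤ (M + 1) * ε' := by
    intro x hx
    have hKx : K x ∈ C := hKC ⟨x, by simpa [Metric.mem_closedBall, dist_zero_right] using hx, rfl⟩
    obtain ⟨y, hy, hxy⟩ := Set.mem_iUnion₂.1 (hcover hKx)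
    have hxy' : ‖K x - y‖ < ε' := by rwa [Metric.mem_ball, dist_eq_norm] at hxy
    calc ‖T n (K x)‖ = ‖T n (K x - y) + T n y‖ := by rw [map_sub]; congr 1; abel
      _ ≤ ‖T n (K x - y)‖ + ‖T n y‖ := norm_add_le _ _
      _ ≤ M * ε' + ε' := by
          gcongr
          · calc ‖T n (K x - y)‖ ≤ ‖T n‖ * ‖K x - y‖ := (T n).le_opNorm _
              _ ≤ M * ε' := by
                  apply mul_le_mul (hM n) hxy'.le (norm_nonneg _) hM0
          · exact (hsmall y hy).le
      _ = (M + 1) * ε' := by ring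
  have hop : ‖(T n).comp K‖ ≤ (M + 1) * ε' := by
    refine ContinuousLinearMap.opNorm_le_bound _ (by positivity) (fun x => ?_)
    rcases eq_or_ne x 0 with rfl | hx0
    · simp
    · have hxn : (0 : ℝ) < ‖x‖ := norm_pos_iff.2 hx0
      set c : ℂ := (‖x‖ : ℂ) with hc
      have hcn : ‖c‖ = ‖x‖ := by rw [hc, Complex.norm_real, norm_norm]
      have hc0 : c ≠ 0 := by
        rw [hc]; exact_mod_cast hxn.ne'
      set u : H := c⁻¹ • x with hu
      have hun : ‖u‖ ≤ 1 := by
        rw [hu, norm_smul, norm_inv, hcn, inv_mul_cancel₀ hxn.ne']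
      have hfu : (T n).comp K x = c • ((T n).comp K u) := by
        rw [hu, map_smul, smul_smul, mul_inv_cancel₀ hc0, one_smul]
      rw [hfu, norm_smul, hcn, mul_comm]
      exact mul_le_mul_of_nonneg_right (hball u hun) hxn.le
  calc dist ‖(T n).comp K‖ 0 = ‖(T n).comp K‖ := by
        rw [dist_zero_right, Real.norm_eq_abs, abs_of_nonneg (norm_nonneg _)]
    _ ≤ (M + 1) * ε' := hop
    _ < ε := by
        rw [hε'def]
        rw [div_eq_mul_inv, ← mul_assoc]
        have h2 : (M + 1) * (2 * (M + 2))⁻¹ < 1 := by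
          rw [mul_inv_lt_iff₀ (by positivity), one_mul]
          nlinarith
        nlinarith [mul_lt_mul_of_pos_right h2 hε]

/-- Schauder: the adjoint of a compact operator on a Hilbert space is compact. -/
lemma isCompactOperator_adjoint {K : H →L[ℂ] H} (hK : IsCompactOperator (⇑K)) :
    IsCompactOperator (⇑(ContinuousLinearMap.adjoint K)) := by
  set Ks := ContinuousLinearMap.adjoint K with hKs
  set B : Set H := closedBall (0 : H) 1 with hB
  have hKKs : IsCompactOperator (⇑(K.comp Ks)) := hK.comp_clm Ks
  obtain ⟨C, hC, hCsub⟩ := hKKs.image_closedBall_subset_compact (𝕜₁ := ℂ) 1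
  have htbC : TotallyBounded ((⇑(K.comp Ks)) '' B) :=
    (hC.totallyBounded).subset (by exact_mod_cast hCsub)
  have htb : TotallyBounded ((⇑Ks) '' B) := by
    rw [Metric.totallyBounded_iff]
    intro ε hε
    set δ : ℝ := ε ^ 2 / 4 with hδdef
    have hδ : 0 < δ := by positivity
    obtain ⟨t, htsub, htfin, hcover⟩ := finite_approx_of_totallyBounded htbC δ hδ
    have hchoice : ∀ y ∈ t, ∃ u ∈ B, (K.comp Ks) u = y := by
      intro y hy
      obtain ⟨u, hu, huy⟩ := htsub hy
      exact ⟨u, hu, huy⟩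
    choose fu hfuB hfueq using hchoice
    haveI := htfin.to_subtype
    refine ⟨(fun p : {y // y ∈ t} => Ks (fu p.1 p.2)) '' Set.univ, (Set.finite_univ.image _), ?_⟩
    rintro _ ⟨u, huB, rfl⟩
    have hKKu : (K.comp Ks) u ∈ (⇑(K.comp Ks)) '' B := ⟨u, huB, rfl⟩
    obtain ⟨y, hy, hxy⟩ := Set.mem_iUnion₂.1 (hcover hKKu)
    have hxy' : ‖(K.comp Ks) u - y‖ < δ := by rwa [Metric.mem_ball, dist_eq_norm] at hxy
    refine Set.mem_iUnion₂.2 ⟨Ks (fu y hy), ⟨⟨y, hy⟩, Set.mem_univ _, rfl⟩, ?_⟩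
    rw [Metric.mem_ball, dist_eq_norm]
    set v : H := u - fu y hy with hv
    have hKv : ‖(K.comp Ks) v‖ < δ := by
      rw [hv, map_sub]
      rw [hfueq y hy]
      exact hxy'
    have hvnorm : ‖v‖ ≤ 2 := by
      rw [hv]
      calc ‖u - fu y hy‖ ≤ ‖u‖ + ‖fu y hy‖ := norm_sub_le _ _
        _ ≤ 1 + 1 := by
            gcongr
            · simpa [hB, Metric.mem_closedBall, dist_zero_right] using huB
            · simpa [hB, Metric.mem_closedBall, dist_zero_right] using hfuB y hy
        _ = 2 := by norm_num
    have hsq : ‖Ks v‖ ^ 2 ≤ ‖(K.comp Ks) v‖ * ‖v‖ := by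
      have h1 : ⟪Ks v, Ks v⟫ = ⟪v, (K.comp Ks) v⟫ := by
        rw [hKs, adjoint_inner_left]
        rfl
      calc ‖Ks v‖ ^ 2 = RCLike.re ⟪Ks v, Ks v⟫ := by
            rw [@inner_self_eq_norm_sq ℂ]
        _ = RCLike.re ⟪v, (K.comp Ks) v⟫ := by rw [h1]
        _ ≤ ‖⟪v, (K.comp Ks) v⟫‖ := RCLike.re_le_norm _
        _ ≤ ‖v‖ * ‖(K.comp Ks) v‖ := norm_inner_le_norm _ _
        _ = ‖(K.comp Ks) v‖ * ‖v‖ := mul_comm _ _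
    have : ‖Ks u - Ks (fu y hy)‖ = ‖Ks v‖ := by rw [hv, map_sub]
    rw [this]
    have h2 : ‖Ks v‖ ^ 2 < ε ^ 2 := by
      calc ‖Ks v‖ ^ 2 ≤ ‖(K.comp Ks) v‖ * ‖v‖ := hsq
        _ ≤ δ * 2 := by
            apply mul_le_mul hKv.le hvnorm (norm_nonneg _) hδ.le
        _ < ε ^ 2 := by rw [hδdef]; nlinarith
    exact lt_of_pow_lt_pow_left₀ 2 hε.le h2
  refine ⟨closure ((⇑Ks) '' B), ?_, ?_⟩
  · exact TotallyBounded.isCompact_of_isClosed htb.closure isClosed_closure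
  · refine Filter.mem_of_superset (Metric.closedBall_mem_nhds 0 one_pos) ?_
    intro x hx
    exact subset_closure ⟨x, hx, rfl⟩

lemma PKP_norm_le (P K : H →L[ℂ] H) (hPle : ∀ x, ‖P x‖ ≤ ‖x‖) :
    ‖P.comp (K.comp P)‖ ≤ ‖K‖ := by
  refine ContinuousLinearMap.opNorm_le_bound _ (norm_nonneg K) (fun x => ?_)
  simp only [ContinuousLinearMap.comp_apply]
  calc ‖P (K (P x))‖ ≤ ‖K (P x)‖ := hPle _
    _ ≤ ‖K‖ * ‖P x‖ := K.le_opNorm _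
    _ ≤ ‖K‖ * ‖x‖ := by gcongr; exact hPle x

lemma tendsto_PKP_add (P : ℕ → H →L[ℂ] H) (hPle : ∀ n x, ‖P n x‖ ≤ ‖x‖)
    (hP : ∀ x : H, Tendsto (fun n => P n x) atTop (nhds x)) (K : H →L[ℂ] H)
    (G : ℕ → H →L[ℂ] H) (hG : Tendsto (fun n => ‖G n‖) atTop (nhds 0)) (x : H) :
    Tendsto (fun n => P n (K (P n x)) + G n x) atTop (nhds (K x)) := by
  have h1 : Tendsto (fun n => P n (K (P n x))) atTop (nhds (K x)) :=
    tendsto_P_apply P hPle hP ((K.continuous.tendsto x).comp (hP x))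
  have h2 : Tendsto (fun n => G n x) atTop (nhds 0) := by
    rw [tendsto_zero_iff_norm_tendsto_zero]
    exact squeeze_zero (fun n => norm_nonneg _) (fun n => (G n).le_opNorm x)
      (by simpa using hG.mul_const ‖x‖)
  simpa using h1.add h2

end AuxLemmas

/-- `J = {(P_n K P_n + G_n) : K compact, ‖G_n‖ → 0}` is contained in the
C*-algebra `A` of sequences possessing both strong limits, and it is a closed
two-sided ideal of `A`. -/
theorem stmt19 {H : Type*} [NormedAddCommGroup H] [InnerProductSpace ℂ H]
    [CompleteSpace H] (P : ℕ → H →L[ℂ] H)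
    (hidem : ∀ n, (P n).comp (P n) = P n)
    (hsa : ∀ n, ContinuousLinearMap.adjoint (P n) = P n)
    (hP : ∀ x : H, Filter.Tendsto (fun n => P n x) Filter.atTop (nhds x)) :
    (∀ A : ℕ → H →L[ℂ] H, memJ P A → memA P A) ∧
    (∀ A J : ℕ → H →L[ℂ] H, memA P A → memJ P J →
      memJ P (fun n => (A n).comp (J n)) ∧ memJ P (fun n => (J n).comp (A n))) ∧
    (∀ J₁ J₂ : ℕ → H →L[ℂ] H, memJ P J₁ → memJ P J₂ →
      memJ P (fun n => J₁ n + J₂ n)) ∧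
    (∀ A : ℕ → H →L[ℂ] H, memA P A →
      (∀ δ : ℝ, 0 < δ → ∃ J : ℕ → H →L[ℂ] H, memJ P J ∧ ∀ n, ‖A n - J n‖ ≤ δ) →
      memJ P A) := by
  have hPle : ∀ n x, ‖P n x‖ ≤ ‖x‖ := fun n => proj_norm_apply_le (P n) (hidem n) (hsa n)
  have hPn1 : ∀ n, ‖P n‖ ≤ 1 := fun n =>
    ContinuousLinearMap.opNorm_le_bound _ zero_le_one (fun x => by rw [one_mul]; exact hPle n x)
  have hPPx : ∀ n y, P n (P n y) = P n y := fun n y => by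
    simpa using ContinuousLinearMap.ext_iff.mp (hidem n) y
  -- absorption lemmas for sequences satisfying the memT compression identity
  have habsRx : ∀ (B : ℕ → H →L[ℂ] H), (∀ n, (P n).comp ((B n).comp (P n)) = B n) →
      ∀ n y, B n (P n y) = B n y := by
    intro B hB n y
    have h1 : ∀ z, P n (B n (P n z)) = B n z := fun z => by
      simpa using ContinuousLinearMap.ext_iff.mp (hB n) z
    calc B n (P n y) = P n (B n (P n (P n y))) := (h1 (P n y)).symm
      _ = P n (B n (P n y)) := by rw [hPPx]
      _ = B n y := h1 y
  have habsLx : ∀ (B : ℕ → H →L[ℂ] H), (∀ n, (P n).comp ((B n).comp (P n)) = B n) →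
      ∀ n y, P n (B n y) = B n y := by
    intro B hB n y
    have h1 : ∀ z, P n (B n (P n z)) = B n z := fun z => by
      simpa using ContinuousLinearMap.ext_iff.mp (hB n) z
    calc P n (B n y) = P n (B n (P n y)) := by rw [habsRx B hB]
      _ = B n y := h1 y
  have habsL : ∀ (B : ℕ → H →L[ℂ] H), (∀ n, (P n).comp ((B n).comp (P n)) = B n) →
      ∀ n, (P n).comp (B n) = B n := by
    intro B hB n
    ext x
    simp only [ContinuousLinearMap.comp_apply]
    exact habsLx B hB n x
  have hadjx : ∀ (B : ℕ → H →L[ℂ] H), (∀ n, (P n).comp ((B n).comp (P n)) = B n) →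
      ∀ n y, (ContinuousLinearMap.adjoint (B n)) (P n y) = (ContinuousLinearMap.adjoint (B n)) y := by
    intro B hB n y
    have h1 : (ContinuousLinearMap.adjoint (B n)).comp (P n) = ContinuousLinearMap.adjoint (B n) := by
      conv_rhs => rw [← habsL B hB n]
      rw [adjoint_comp, hsa n]
    calc (ContinuousLinearMap.adjoint (B n)) (P n y)
        = ((ContinuousLinearMap.adjoint (B n)).comp (P n)) y := rfl
      _ = (ContinuousLinearMap.adjoint (B n)) y := by rw [h1]
  have hadjnorm : ∀ (X : H →L[ℂ] H), ‖ContinuousLinearMap.adjoint X‖ = ‖X‖ := fun X =>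
    LinearIsometryEquiv.norm_map ContinuousLinearMap.adjoint X
  -- Part 1 : J ⊆ A
  have hpart1 : ∀ A : ℕ → H →L[ℂ] H, memJ P A → memA P A := by
    intro A hA
    obtain ⟨K, hKc, G, ⟨⟨hGT, CG, hCG⟩, hGt⟩, hAeq⟩ := hA
    have hGTx : ∀ n x, P n (G n (P n x)) = G n x := fun n x => by
      simpa using ContinuousLinearMap.ext_iff.mp (hGT n) x
    have hGRx : ∀ n y, G n (P n y) = G n y := habsRx G hGT
    have hGadjx := hadjx G hGT
    have hGtadj : Tendsto (fun n => ‖ContinuousLinearMap.adjoint (G n)‖) atTop (nhds 0) := by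
      simpa only [hadjnorm] using hGt
    have hAT : ∀ n, (P n).comp ((A n).comp (P n)) = A n := by
      intro n
      ext x
      rw [hAeq n]
      simp only [ContinuousLinearMap.add_apply, ContinuousLinearMap.comp_apply,
        ContinuousLinearMap.map_add, hPPx, hGTx]
    refine ⟨⟨hAT, ‖K‖ + CG, fun n => ?_⟩, K, fun x => ?_, fun x => ?_⟩
    · rw [hAeq n]
      exact (norm_add_le _ _).trans (add_le_add (PKP_norm_le _ _ (hPle n)) (hCG n))
    · refine (tendsto_PKP_add P hPle hP K G hGt x).congr (fun n => ?_)
      rw [hAeq n]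
      simp only [ContinuousLinearMap.add_apply, ContinuousLinearMap.comp_apply, hPPx, hGRx]
    · refine (tendsto_PKP_add P hPle hP (ContinuousLinearMap.adjoint K)
        (fun n => ContinuousLinearMap.adjoint (G n)) hGtadj x).congr (fun n => ?_)
      rw [hAeq n, map_add ContinuousLinearMap.adjoint, adjoint_comp, adjoint_comp, hsa n]
      simp only [ContinuousLinearMap.add_apply, ContinuousLinearMap.comp_apply, hPPx,
        hGadjx]
  refine ⟨hpart1, ?_, ?_, ?_⟩
  -- Part 2 : two-sided ideal (products)
  · intro A J hA hJ
    obtain ⟨⟨hAT, CA, hCA⟩, L, hL1, hL2⟩ := hA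
    have hJA := hpart1 J hJ
    obtain ⟨⟨hJT, CJ, hCJ⟩, _⟩ := hJA
    obtain ⟨K, hKc, G, ⟨⟨hGT, CG, hCG⟩, hGt⟩, hJeq⟩ := hJ
    have hCA0 : 0 ≤ CA := le_trans (norm_nonneg _) (hCA 0)
    have hAx := habsLx A hAT
    have hAPx := habsRx A hAT
    have hJx := habsLx J hJT
    have hJPx := habsRx J hJT
    have hadjAx := hadjx A hAT
    have hA1 : ∀ x, Tendsto (fun n => A n x) atTop (nhds (L x)) := fun x =>
      (hL1 x).congr (fun n => hAPx n x)
    have hA2 : ∀ x, Tendsto (fun n => (ContinuousLinearMap.adjoint (A n)) x) atTop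
        (nhds ((ContinuousLinearMap.adjoint L) x)) := fun x =>
      (hL2 x).congr (fun n => hadjAx n x)
    constructor
    -- A ∘ J ∈ memJ
    · set T : ℕ → H →L[ℂ] H := fun n => A n - (P n).comp L with hT
      have hTs : ∀ x, Tendsto (fun n => T n x) atTop (nhds 0) := by
        intro x
        have h0 := (hA1 x).sub (hP (L x))
        simp only [sub_self] at h0
        exact h0.congr (fun n => by
          simp [hT, ContinuousLinearMap.sub_apply, ContinuousLinearMap.comp_apply])
      have hTb : ∀ n, ‖T n‖ ≤ CA + ‖L‖ := by
        intro n
        refine (norm_sub_le _ _).trans (add_le_add (hCA n) ?_)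
        calc ‖(P n).comp L‖ ≤ ‖P n‖ * ‖L‖ := ContinuousLinearMap.opNorm_comp_le _ _
          _ ≤ 1 * ‖L‖ := by gcongr; exact hPn1 n
          _ = ‖L‖ := one_mul _
      have hTK := norm_comp_compact_tendsto_zero T K hKc (CA + ‖L‖) hTb hTs
      refine ⟨L.comp K, ?_, fun n => (A n).comp (J n) - (P n).comp ((L.comp K).comp (P n)),
        ⟨⟨?_, CA * CJ + ‖L.comp K‖, fun n => ?_⟩, ?_⟩, fun n => (add_sub_cancel _ _).symm⟩
      · rw [ContinuousLinearMap.coe_comp']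
        exact hKc.continuous_comp L.continuous
      · intro n
        ext x
        simp only [ContinuousLinearMap.sub_apply, ContinuousLinearMap.comp_apply,
          ContinuousLinearMap.map_sub, hPPx, hAx, hJPx]
      · refine (norm_sub_le _ _).trans (add_le_add ?_ (PKP_norm_le _ _ (hPle n)))
        calc ‖(A n).comp (J n)‖ ≤ ‖A n‖ * ‖J n‖ := ContinuousLinearMap.opNorm_comp_le _ _
          _ ≤ CA * CJ := mul_le_mul (hCA n) (hCJ n) (norm_nonneg _) hCA0
      · have hkey : ∀ n, (A n).comp (J n) - (P n).comp ((L.comp K).comp (P n)) =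
            ((T n).comp K).comp (P n) + (A n).comp (G n) := by
          intro n
          ext x
          simp only [hT, hJeq, ContinuousLinearMap.sub_apply, ContinuousLinearMap.add_apply,
            ContinuousLinearMap.comp_apply, ContinuousLinearMap.map_add, hAPx, hPPx]
          abel
        have hb : ∀ n, ‖(A n).comp (J n) - (P n).comp ((L.comp K).comp (P n))‖ ≤
            ‖(T n).comp K‖ + CA * ‖G n‖ := by
          intro n
          rw [hkey n]
          refine (norm_add_le _ _).trans (add_le_add ?_ ?_)
          · calc ‖((T n).comp K).comp (P n)‖ ≤ ‖(T n).comp K‖ * ‖P n‖ :=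
                ContinuousLinearMap.opNorm_comp_le _ _
              _ ≤ ‖(T n).comp K‖ * 1 := by gcongr; exact hPn1 n
              _ = ‖(T n).comp K‖ := mul_one _
          · calc ‖(A n).comp (G n)‖ ≤ ‖A n‖ * ‖G n‖ := ContinuousLinearMap.opNorm_comp_le _ _
              _ ≤ CA * ‖G n‖ := mul_le_mul_of_nonneg_right (hCA n) (norm_nonneg _)
        refine squeeze_zero (fun n => norm_nonneg _) hb ?_
        simpa using hTK.add (hGt.const_mul CA)
    -- J ∘ A ∈ memJ
    · set S : ℕ → H →L[ℂ] H := fun n =>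
        ContinuousLinearMap.adjoint (A n) - (P n).comp (ContinuousLinearMap.adjoint L) with hS
      have hSs : ∀ x, Tendsto (fun n => S n x) atTop (nhds 0) := by
        intro x
        have h0 := (hA2 x).sub (hP ((ContinuousLinearMap.adjoint L) x))
        simp only [sub_self] at h0
        exact h0.congr (fun n => by
          simp [hS, ContinuousLinearMap.sub_apply, ContinuousLinearMap.comp_apply])
      have hSb : ∀ n, ‖S n‖ ≤ CA + ‖L‖ := by
        intro n
        refine (norm_sub_le _ _).trans (add_le_add ?_ ?_)
        · rw [hadjnorm]; exact hCA n
        · calc ‖(P n).comp (ContinuousLinearMap.adjoint L)‖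
              ≤ ‖P n‖ * ‖ContinuousLinearMap.adjoint L‖ := ContinuousLinearMap.opNorm_comp_le _ _
            _ ≤ 1 * ‖L‖ := by rw [hadjnorm]; gcongr; exact hPn1 n
            _ = ‖L‖ := one_mul _
      have hSK := norm_comp_compact_tendsto_zero S (ContinuousLinearMap.adjoint K)
        (isCompactOperator_adjoint hKc) (CA + ‖L‖) hSb hSs
      have hnormid : ∀ n, ‖K.comp (A n - L.comp (P n))‖ = ‖(S n).comp (ContinuousLinearMap.adjoint K)‖ := by
        intro n
        have hadj : ContinuousLinearMap.adjoint (K.comp (A n - L.comp (P n))) =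
            (S n).comp (ContinuousLinearMap.adjoint K) := by
          rw [adjoint_comp]
          congr 1
          rw [map_sub ContinuousLinearMap.adjoint, adjoint_comp, hsa n]
        rw [← hadj, hadjnorm]
      have hKTtend : Tendsto (fun n => ‖K.comp (A n - L.comp (P n))‖) atTop (nhds 0) := by
        simpa only [hnormid] using hSK
      refine ⟨K.comp L, ?_, fun n => (J n).comp (A n) - (P n).comp ((K.comp L).comp (P n)),
        ⟨⟨?_, CJ * CA + ‖K.comp L‖, fun n => ?_⟩, ?_⟩, fun n => (add_sub_cancel _ _).symm⟩
      · rw [ContinuousLinearMap.coe_comp']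
        exact hKc.comp_clm L
      · intro n
        ext x
        simp only [ContinuousLinearMap.sub_apply, ContinuousLinearMap.comp_apply,
          ContinuousLinearMap.map_sub, hPPx, hJx, hAPx]
      · refine (norm_sub_le _ _).trans (add_le_add ?_ (PKP_norm_le _ _ (hPle n)))
        calc ‖(J n).comp (A n)‖ ≤ ‖J n‖ * ‖A n‖ := ContinuousLinearMap.opNorm_comp_le _ _
          _ ≤ CJ * CA := mul_le_mul (hCJ n) (hCA n) (norm_nonneg _)
              (le_trans (norm_nonneg _) (hCJ 0))
      · have hkey : ∀ n, (J n).comp (A n) - (P n).comp ((K.comp L).comp (P n)) =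
            (P n).comp (K.comp (A n - L.comp (P n))) + (G n).comp (A n) := by
          intro n
          ext x
          simp only [hJeq, ContinuousLinearMap.sub_apply, ContinuousLinearMap.add_apply,
            ContinuousLinearMap.comp_apply, ContinuousLinearMap.map_sub,
            ContinuousLinearMap.map_add, ContinuousLinearMap.add_comp,
            ContinuousLinearMap.comp_add, hAx, hPPx]
          abel
        have hb : ∀ n, ‖(J n).comp (A n) - (P n).comp ((K.comp L).comp (P n))‖ ≤
            ‖K.comp (A n - L.comp (P n))‖ + ‖G n‖ * CA := by
          intro n
          rw [hkey n]
          refine (norm_add_le _ _).trans (add_le_add ?_ ?_)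
          · calc ‖(P n).comp (K.comp (A n - L.comp (P n)))‖
                ≤ ‖P n‖ * ‖K.comp (A n - L.comp (P n))‖ := ContinuousLinearMap.opNorm_comp_le _ _
              _ ≤ 1 * ‖K.comp (A n - L.comp (P n))‖ := by gcongr; exact hPn1 n
              _ = _ := one_mul _
          · calc ‖(G n).comp (A n)‖ ≤ ‖G n‖ * ‖A n‖ := ContinuousLinearMap.opNorm_comp_le _ _
              _ ≤ ‖G n‖ * CA := mul_le_mul_of_nonneg_left (hCA n) (norm_nonneg _)
        refine squeeze_zero (fun n => norm_nonneg _) hb ?_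
        simpa using hKTtend.add (hGt.mul_const CA)
  -- Part 3 : closed under addition
  · intro J₁ J₂ hJ1 hJ2
    obtain ⟨K₁, hK1c, G₁, ⟨⟨hG1T, C₁, hC1⟩, hG1t⟩, hJ1eq⟩ := hJ1
    obtain ⟨K₂, hK2c, G₂, ⟨⟨hG2T, C₂, hC2⟩, hG2t⟩, hJ2eq⟩ := hJ2
    refine ⟨K₁ + K₂, ?_, fun n => G₁ n + G₂ n, ⟨⟨?_, C₁ + C₂, fun n => ?_⟩, ?_⟩, fun n => ?_⟩
    · rw [ContinuousLinearMap.coe_add']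
      exact hK1c.add hK2c
    · intro n
      ext x
      have h1 : ∀ x, P n (G₁ n (P n x)) = G₁ n x := fun x => by
        simpa using ContinuousLinearMap.ext_iff.mp (hG1T n) x
      have h2 : ∀ x, P n (G₂ n (P n x)) = G₂ n x := fun x => by
        simpa using ContinuousLinearMap.ext_iff.mp (hG2T n) x
      simp only [ContinuousLinearMap.add_apply, ContinuousLinearMap.comp_apply,
        ContinuousLinearMap.map_add, h1, h2]
    · exact (norm_add_le _ _).trans (add_le_add (hC1 n) (hC2 n))
    · refine squeeze_zero (fun n => norm_nonneg _) (fun n => norm_add_le _ _) ?_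
      simpa using hG1t.add hG2t
    · show J₁ n + J₂ n = (P n).comp ((K₁ + K₂).comp (P n)) + (G₁ n + G₂ n)
      rw [hJ1eq n, hJ2eq n]
      simp only [ContinuousLinearMap.add_comp, ContinuousLinearMap.comp_add]
      abel
  -- Part 4 : closedness
  · intro A hA happrox
    obtain ⟨⟨hAT, CA, hCA⟩, L, hL1, hL2⟩ := hA
    have hAPx := habsRx A hAT
    have hA1 : ∀ x, Tendsto (fun n => A n x) atTop (nhds (L x)) := fun x =>
      (hL1 x).congr (fun n => hAPx n x)
    have h := fun k : ℕ => happrox (1 / (k + 1)) (by positivity)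
    choose Jk hJk hJkb using h
    choose K hKc G hG hJkeq using hJk
    -- ‖L - K k‖ ≤ 1/(k+1)
    have hLK : ∀ k : ℕ, ‖L - K k‖ ≤ 1 / (k + 1) := by
      intro k
      refine opNorm_le_of_strong (L - K k) (fun n => A n - Jk k n) _ (by positivity)
        (fun n => hJkb k n) (fun x => ?_)
      have h1 := hA1 x
      have h2 : Tendsto (fun n => Jk k n x) atTop (nhds (K k x)) := by
        refine (tendsto_PKP_add P hPle hP (K k) (G k) (hG k).2 x).congr (fun n => ?_)
        rw [hJkeq k n]
        have hGRx : ∀ y, G k n (P n y) = G k n y := habsRx (G k) (fun m => ((hG k).1).1 m) n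
        simp only [ContinuousLinearMap.add_apply, ContinuousLinearMap.comp_apply, hPPx]
      have := h1.sub h2
      exact this.congr (fun n => by simp [ContinuousLinearMap.sub_apply])
    -- K k → L in norm, hence L is compact
    have hKtend : Tendsto (fun k => K k) atTop (nhds L) := by
      rw [tendsto_iff_norm_sub_tendsto_zero]
      refine squeeze_zero (fun k => norm_nonneg _) (fun k => ?_) tendsto_one_div_add_atTop_nhds_zero_nat
      rw [← norm_neg]
      simpa using hLK k
    have hLc : IsCompactOperator (⇑L) :=
      isCompactOperator_of_tendsto hKtend (Eventually.of_forall hKc)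
    refine ⟨L, hLc, fun n => A n - (P n).comp (L.comp (P n)), ⟨⟨?_, CA + ‖L‖, fun n => ?_⟩, ?_⟩,
      fun n => (add_sub_cancel _ _).symm⟩
    · intro n
      ext x
      have hATx : ∀ y, P n (A n (P n y)) = A n y := fun y => by
        simpa using ContinuousLinearMap.ext_iff.mp (hAT n) y
      simp only [ContinuousLinearMap.sub_apply, ContinuousLinearMap.comp_apply,
        ContinuousLinearMap.map_sub, hPPx, hATx]
    · exact (norm_sub_le _ _).trans (add_le_add (hCA n) (PKP_norm_le _ _ (hPle n)))
    · rw [Metric.tendsto_atTop]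
      intro ε hε
      obtain ⟨k, hk⟩ := exists_nat_one_div_lt (show (0:ℝ) < ε / 4 by positivity)
      have hGk := (hG k).2
      have hGev : ∀ᶠ n in atTop, ‖G k n‖ < ε / 4 := by
        have := hGk
        rw [Metric.tendsto_atTop] at this
        obtain ⟨N, hN⟩ := this (ε / 4) (by positivity)
        refine eventually_atTop.2 ⟨N, fun n hn => ?_⟩
        have := hN n hn
        rwa [Real.dist_eq, sub_zero, abs_of_nonneg (norm_nonneg _)] at this
      obtain ⟨N, hN⟩ := eventually_atTop.1 hGev
      refine ⟨N, fun n hn => ?_⟩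
      have hb : ‖A n - (P n).comp (L.comp (P n))‖ ≤
          1 / (k + 1) + ‖G k n‖ + 1 / (k + 1) := by
        have hdecomp : A n - (P n).comp (L.comp (P n)) =
            (A n - Jk k n) + G k n + (P n).comp (((K k : H →L[ℂ] H) - L).comp (P n)) := by
          rw [hJkeq k n]
          simp only [ContinuousLinearMap.sub_comp, ContinuousLinearMap.comp_sub]
          abel
        rw [hdecomp]
        refine (norm_add_le _ _).trans (add_le_add ((norm_add_le _ _).trans
          (add_le_add (hJkb k n) le_rfl)) ?_)
        refine (PKP_norm_le (P n) _ (hPle n)).trans ?_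
        rw [← norm_neg]
        simpa using hLK k
      rw [Real.dist_eq, sub_zero, abs_of_nonneg (norm_nonneg _)]
      calc ‖A n - (P n).comp (L.comp (P n))‖ ≤ 1 / (k + 1) + ‖G k n‖ + 1 / (k + 1) := hb
        _ < ε / 4 + ε / 4 + ε / 4 := by
            have := hN n hn
            have hk' : (1 : ℝ) / (k + 1) < ε / 4 := by exact_mod_cast hk
            gcongr
        _ < ε := by linarith
end
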